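/- Let G be a finite group acting on a set Y (or variety Y over k with χ_c additive and multiplicative), and for each cyclic subgroup C of G let φ_{Y,Y/C,C} denote the locus of points of Y/C whose decomposition group is exactly C. Then for any cyclic subgroup C of G, the recursion formula |C|·[Y/C] = ∑_{A subgroup of C} |A|·χ_c([φ_{Y,Y/A,A}]) holds, given that the loci φ_{Y,Y/C,A} for subgroups A of C partition Y/C and that χ_c([φ_{Y,Y/C,A}]) = (|A|/|N_C(A)|)·χ_c([φ_{Y,Y/A,A}]). -/

import Mathlib

open scoped BigOperators

/-- the recursion formula `|C|·[Y/C] = ∑_{A ≤ C} |A|·χ_c([φ_{Y,Y/A,A}])`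
for a cyclic subgroup `C` of a Galois group.  Self-contained version: let `C` be a finite
cyclic group, let `R` be a commutative `ℚ`-algebra (playing the role of
`K₀^mot(Var_k) ⊗ ℚ`), let `y ∈ R` be the class `[Y/C]`, for each subgroup `A` of `C` let
`z A = χ_c([φ_{Y,Y/C,A}])` (the class of the stratum of `Y/C` with decomposition group
`A`) and `x A = χ_c([φ_{Y,Y/A,A}])`.  Assume the strata partition `Y/C`, i.e.
`y = ∑_{A ≤ C} z A`, and the normalization `z A = (|A|/|N_C(A)|)·x A`.  Then
`|C|·y = ∑_{A ≤ C} |A|·x A`. -/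
theorem chi_c_recursion_formula
    {C : Type*} [Group C] [Finite C] [IsCyclic C]
    {R : Type*} [CommRing R] [Algebra ℚ R]
    (x z : Subgroup C → R) (y : R)
    (hpart : y = ∑ᶠ A : Subgroup C, z A)
    (hnorm : ∀ A : Subgroup C,
      z A = ((Nat.card A : ℚ) / (Nat.card (Subgroup.normalizer (A : Set C)) : ℚ)) • x A) :
    (Nat.card C : ℚ) • y = ∑ᶠ A : Subgroup C, (Nat.card A : ℚ) • x A := by
  letI : CommGroup C := IsCyclic.commGroup
  have hC : (Nat.card C : ℚ) ≠ 0 := by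
    exact_mod_cast Nat.card_pos.ne'
  have hnorm' : ∀ A : Subgroup C, (Nat.card C : ℚ) • z A = (Nat.card A : ℚ) • x A := by
    intro A
    have hA : Subgroup.normalizer (A : Set C) = ⊤ := Subgroup.normalizer_eq_top_iff.mpr inferInstance
    rw [hnorm A, hA, smul_smul]
    congr 1
    rw [Nat.card_congr Subgroup.topEquiv.toEquiv]
    field_simp
  rw [hpart, smul_finsum]
  exact finsum_congr hnorm'
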